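/- arXiv:1603.04841 — 2 statements merged into one kernel-verified Lean document; each statement's English description precedes it below -/
import Mathlib

section
/- Let $h : \mathbb{R} \to \mathbb{R}$ be an even twice differentiable function whose second derivative is convex, and let $b \ge 0$. Then the function $g_{b,h} : \mathbb{R} \to \mathbb{R}$ defined by $g_{b,h}(u) := h\big(\sqrt{u^2+b}\big)$ is also even, twice differentiable, and has convex second derivative. -/
open Real

noncomputable section

open MeasureTheory Filter Set intervalIntegral Topology


/-- moving average operator -/
def avg (ε : ℝ) (φ : ℝ → ℝ) : ℝ → ℝ :=
  fun x => ((∫ t in (0:ℝ)..(x+ε), φ t) - ∫ t in (0:ℝ)..(x-ε), φ t) / (2*ε)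

lemma avg_eq {φ : ℝ → ℝ} (hφ : Continuous φ) (ε x : ℝ) :
    avg ε φ x = (∫ t in (x-ε)..(x+ε), φ t) / (2*ε) := by
  unfold avg
  rw [← intervalIntegral.integral_add_adjacent_intervals (b := x - ε)
    (hφ.intervalIntegrable _ _) (hφ.intervalIntegrable _ _)]
  ring_nf

lemma avg_hasDerivAt {φ : ℝ → ℝ} (hφ : Continuous φ) (ε x : ℝ) :
    HasDerivAt (avg ε φ) ((φ (x+ε) - φ (x-ε)) / (2*ε)) x := by
  have h1 : HasDerivAt (fun y : ℝ => ∫ t in (0:ℝ)..(y+ε), φ t) (φ (x+ε)) x := by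
    have := ((hφ.integral_hasStrictDerivAt 0 (x+ε)).hasDerivAt).comp x
      ((hasDerivAt_id x).add_const ε)
    simpa [Function.comp_def] using this
  have h2 : HasDerivAt (fun y : ℝ => ∫ t in (0:ℝ)..(y-ε), φ t) (φ (x-ε)) x := by
    have := ((hφ.integral_hasStrictDerivAt 0 (x-ε)).hasDerivAt).comp x
      ((hasDerivAt_id x).sub_const ε)
    simpa [Function.comp_def] using this
  exact (h1.sub h2).div_const _

lemma avg_continuous {φ : ℝ → ℝ} (hφ : Continuous φ) (ε : ℝ) :
    Continuous (avg ε φ) :=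
  Differentiable.continuous (fun x => (avg_hasDerivAt hφ ε x).differentiableAt)

lemma avg_even {φ : ℝ → ℝ} (hφe : ∀ x, φ (-x) = φ x) (ε x : ℝ) :
    avg ε φ (-x) = avg ε φ x := by
  have key : ∀ y : ℝ, (∫ t in (0:ℝ)..(-y), φ t) = - ∫ t in (0:ℝ)..y, φ t := by
    intro y
    have h0 : (∫ t in (0:ℝ)..(-y), φ t) = ∫ t in (0:ℝ)..(-y), φ (-t) :=
      intervalIntegral.integral_congr fun t _ => (hφe t).symm
    rw [h0, intervalIntegral.integral_comp_neg]
    simp only [neg_neg, neg_zero]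
    exact intervalIntegral.integral_symm 0 y
  unfold avg
  have e1 : -x + ε = -(x - ε) := by ring
  have e2 : -x - ε = -(x + ε) := by ring
  rw [e1, e2, key, key]
  ring

lemma avg_eq' {φ : ℝ → ℝ} (hφ : Continuous φ) (ε x : ℝ) :
    avg ε φ x = (∫ t in (-ε)..ε, φ (x + t)) / (2*ε) := by
  rw [avg_eq hφ, intervalIntegral.integral_comp_add_left]
  ring_nf

lemma avg_convex {φ : ℝ → ℝ} (hφ : Continuous φ) (hc : ConvexOn ℝ Set.univ φ)
    {ε : ℝ} (hε : 0 < ε) : ConvexOn ℝ Set.univ (avg ε φ) := by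
  refine ⟨convex_univ, fun x _ y _ a c ha hc' hac => ?_⟩
  simp only [smul_eq_mul]
  rw [avg_eq' hφ, avg_eq' hφ, avg_eq' hφ]
  have hint : ∀ z : ℝ, IntervalIntegrable (fun t => φ (z + t)) volume (-ε) ε :=
    fun z => (hφ.comp (continuous_const.add continuous_id)).intervalIntegrable _ _
  have hmono : (∫ t in (-ε)..ε, φ (a*x + c*y + t))
      ≤ a * (∫ t in (-ε)..ε, φ (x + t)) + c * (∫ t in (-ε)..ε, φ (y + t)) := by
    rw [← intervalIntegral.integral_const_mul, ← intervalIntegral.integral_const_mul,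
      ← intervalIntegral.integral_add ((hint x).const_mul a) ((hint y).const_mul c)]
    refine intervalIntegral.integral_mono_on (by linarith) (hint _)
      (((hint x).const_mul a).add ((hint y).const_mul c)) (fun t _ => ?_)
    have h2 := hc.2 (Set.mem_univ (x + t)) (Set.mem_univ (y + t)) ha hc' hac
    simp only [smul_eq_mul] at h2
    have e : a * (x + t) + c * (y + t) = a*x + c*y + t := by linear_combination t * hac
    rwa [e] at h2
  have e2 : a * ((∫ t in (-ε)..ε, φ (x + t)) / (2*ε)) + c * ((∫ t in (-ε)..ε, φ (y + t)) / (2*ε))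
      = (a * (∫ t in (-ε)..ε, φ (x + t)) + c * (∫ t in (-ε)..ε, φ (y + t))) / (2*ε) := by
    ring
  rw [e2]
  exact div_le_div_of_nonneg_right hmono (by linarith)

lemma avg_close {φ : ℝ → ℝ} (hφ : Continuous φ) {ε x y δ : ℝ} (hε : 0 < ε)
    (h : ∀ t ∈ Set.Icc (x-ε) (x+ε), |φ t - y| ≤ δ) : |avg ε φ x - y| ≤ δ := by
  rw [avg_eq hφ]
  have hIy : (∫ t in (x-ε)..(x+ε), (φ t - y)) = (∫ t in (x-ε)..(x+ε), φ t) - 2*ε*y := by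
    rw [intervalIntegral.integral_sub (hφ.intervalIntegrable _ _)
      (intervalIntegrable_const), intervalIntegral.integral_const]
    simp only [smul_eq_mul]
    ring
  have hsub : Set.uIoc (x-ε) (x+ε) ⊆ Set.Icc (x-ε) (x+ε) := by
    rw [Set.uIoc_of_le (by linarith)]
    exact Set.Ioc_subset_Icc_self
  have hbound : |∫ t in (x-ε)..(x+ε), (φ t - y)| ≤ δ * (2*ε) := by
    have hb := intervalIntegral.norm_integral_le_of_norm_le_const (a := x-ε) (b := x+ε)
      (C := δ) (f := fun t => φ t - y) (fun t ht => h t (hsub ht))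
    have e : |(x+ε) - (x-ε)| = 2*ε := by rw [abs_of_pos (by linarith)]; ring
    calc |∫ t in (x-ε)..(x+ε), (φ t - y)| ≤ δ * |(x+ε)-(x-ε)| := hb
      _ = δ * (2*ε) := by rw [e]
  have e3 : (∫ t in (x-ε)..(x+ε), φ t) / (2*ε) - y
      = (∫ t in (x-ε)..(x+ε), (φ t - y)) / (2*ε) := by
    rw [hIy]
    field_simp
  rw [e3, abs_div, abs_of_pos (by linarith : (0:ℝ) < 2*ε), div_le_iff₀ (by linarith : (0:ℝ) < 2*ε)]
  linarith [hbound]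

/-- FTC: the average of a derivative is a difference quotient of the primitive. -/
lemma avg_of_primitive {Ψ φ : ℝ → ℝ} (hφ : Continuous φ)
    (hΨ : ∀ y, HasDerivAt Ψ (φ y) y) (ε x : ℝ) :
    avg ε φ x = (Ψ (x+ε) - Ψ (x-ε)) / (2*ε) := by
  unfold avg
  have key : ∀ z : ℝ, (∫ t in (0:ℝ)..z, φ t) = Ψ z - Ψ 0 := fun z =>
    intervalIntegral.integral_eq_sub_of_hasDerivAt (fun t _ => hΨ t)
      (hφ.intervalIntegrable _ _)
  rw [key, key]
  ring_nf

/-- convergence of double averages at a point of continuity -/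
lemma avg2_tendsto {φ : ℝ → ℝ} (hφ : Continuous φ) (x : ℝ) :
    Tendsto (fun n : ℕ => avg ((n:ℝ)+1)⁻¹ (avg ((n:ℝ)+1)⁻¹ φ) x) atTop (𝓝 (φ x)) := by
  rw [Metric.tendsto_atTop]
  intro δ hδ
  obtain ⟨η, hη, hball⟩ := Metric.continuousAt_iff.mp (hφ.continuousAt (x := x)) (δ/2)
    (by linarith)
  obtain ⟨N, hN⟩ := exists_nat_gt (2/η)
  refine ⟨N, fun n hn => ?_⟩
  set ε : ℝ := ((n:ℝ)+1)⁻¹ with hεdef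
  have hεpos : 0 < ε := by positivity
  have hε2 : 2*ε < η := by
    have hNn : (N:ℝ) ≤ (n:ℝ) + 1 := by
      have : (N:ℝ) ≤ (n:ℝ) := Nat.cast_le.mpr hn
      linarith
    have h1 : (2:ℝ)/η < (n:ℝ)+1 := lt_of_lt_of_le hN hNn
    have : (2:ℝ) < ((n:ℝ)+1) * η := by
      rw [div_lt_iff₀ hη] at h1; linarith
    rw [hεdef]
    rw [mul_inv_lt_iff₀ (by positivity)]
    linarith
  have inner : ∀ y ∈ Set.Icc (x-ε) (x+ε), |avg ε φ y - φ x| ≤ δ/2 := by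
    intro y hy
    refine avg_close hφ hεpos (fun t ht => ?_)
    have : dist t x < η := by
      rw [Real.dist_eq, abs_lt]
      simp only [Set.mem_Icc] at hy ht
      constructor <;> [linarith [ht.1, hy.1]; linarith [ht.2, hy.2]]
    exact le_of_lt (by simpa [Real.dist_eq] using hball this)
  have outer : |avg ε (avg ε φ) x - φ x| ≤ δ/2 :=
    avg_close (avg_continuous hφ ε) hεpos inner
  rw [Real.dist_eq]
  calc |avg ε (avg ε φ) x - φ x| ≤ δ/2 := outer
    _ < δ := by linarith

/-- pointwise limits of convex functions are convex -/
lemma convexOn_of_tendsto {G : ℕ → ℝ → ℝ} {g : ℝ → ℝ}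
    (hc : ∀ n, ConvexOn ℝ Set.univ (G n))
    (hlim : ∀ x, Tendsto (fun n => G n x) atTop (𝓝 (g x))) :
    ConvexOn ℝ Set.univ g := by
  refine ⟨convex_univ, fun x _ y _ a c ha hc' hac => ?_⟩
  refine le_of_tendsto_of_tendsto' (hlim _) (((hlim x).const_smul a).add
    ((hlim y).const_smul c)) (fun n => ?_)
  exact (hc n).2 (Set.mem_univ x) (Set.mem_univ y) ha hc' hac


lemma smooth_core {b : ℝ} (hb : 0 < b) (f p q H : ℝ → ℝ)
    (hfp : ∀ x, HasDerivAt f (p x) x) (hpq : ∀ x, HasDerivAt p (q x) x)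
    (hq : ∀ x, 0 ≤ q x) (hp0 : p 0 = 0)
    (hH : ∀ x, HasDerivAt H (f x) x) (hH0 : H 0 = 0) :
    ConvexOn ℝ Set.univ (fun u => f (Real.sqrt (u^2+b)) * u^2 / (u^2+b)
      + H (Real.sqrt (u^2+b)) * b / ((u^2+b) * Real.sqrt (u^2+b))) := by
  have hpos : ∀ u : ℝ, 0 < u^2 + b := fun u => by positivity
  set s : ℝ → ℝ := fun u => Real.sqrt (u^2+b) with hsdef
  have hs0 : ∀ u, 0 < s u := fun u => Real.sqrt_pos.mpr (hpos u)
  have hs2 : ∀ u, (s u)^2 = u^2 + b := fun u => Real.sq_sqrt (hpos u).le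
  have hu2 : ∀ u : ℝ, HasDerivAt (fun u : ℝ => u^2+b) (2*u) u := fun u => by
    simpa using (hasDerivAt_pow 2 u).add_const b
  have hs' : ∀ u, HasDerivAt s (u / s u) u := by
    intro u
    have := (hu2 u).sqrt (ne_of_gt (hpos u))
    convert this using 1
    rw [mul_comm 2 (s u), ← mul_div_mul_right (c := (2:ℝ)) (hc := two_ne_zero) (a := u) (b := s u)]
    ring
  have hfc : Continuous f := Differentiable.continuous fun x => (hfp x).differentiableAt
  have hpc : Continuous p := Differentiable.continuous fun x => (hpq x).differentiableAt
  have hHc : Continuous H := Differentiable.continuous fun x => (hH x).differentiableAt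
  have pmono : Monotone p :=
    monotone_of_deriv_nonneg (fun x => (hpq x).differentiableAt)
      (fun x => by rw [(hpq x).deriv]; exact hq x)
  have hpnn : ∀ {y : ℝ}, 0 ≤ y → 0 ≤ p y := fun hy => hp0 ▸ pmono hy
  have fmono : MonotoneOn f (Set.Ici 0) := by
    refine monotoneOn_of_deriv_nonneg (convex_Ici 0) hfc.continuousOn
      (fun x _ => (hfp x).differentiableAt.differentiableWithinAt) (fun x hx => ?_)
    rw [(hfp x).deriv]
    rw [interior_Ici] at hx
    exact hpnn (le_of_lt hx)
  have hHint : ∀ y : ℝ, H y = ∫ t in (0:ℝ)..y, f t := fun y => by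
    rw [intervalIntegral.integral_eq_sub_of_hasDerivAt (fun t _ => hH t)
      (hfc.intervalIntegrable _ _), hH0, sub_zero]
  have hT0 : ∀ {S : ℝ}, 0 ≤ S → H S ≤ S * f S := by
    intro S hS
    rw [hHint S]
    calc (∫ t in (0:ℝ)..S, f t) ≤ ∫ _t in (0:ℝ)..S, f S := by
          refine intervalIntegral.integral_mono_on hS (hfc.intervalIntegrable _ _)
            _root_.intervalIntegrable_const (fun t ht => fmono ht.1 (le_trans ht.1 ht.2) ht.2)
      _ = S * f S := by rw [intervalIntegral.integral_const]; simp
  have hT1 : ∀ {S : ℝ}, 0 ≤ S → S * f S - H S ≤ S^2 * p S / 2 := by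
    intro S hS
    have step : ∀ t ∈ Set.Icc (0:ℝ) S, f S - f t ≤ p S * (S - t) := by
      intro t ht
      have hfS : f S - f t = ∫ τ in t..S, p τ :=
        (intervalIntegral.integral_eq_sub_of_hasDerivAt (fun τ _ => hfp τ)
          (hpc.intervalIntegrable _ _)).symm
      rw [hfS]
      calc (∫ τ in t..S, p τ) ≤ ∫ _τ in t..S, p S := by
            refine intervalIntegral.integral_mono_on ht.2 (hpc.intervalIntegrable _ _)
              _root_.intervalIntegrable_const (fun τ hτ => pmono hτ.2)
        _ = p S * (S - t) := by rw [intervalIntegral.integral_const]; simp [mul_comm]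
    have lhs_eq : S * f S - H S = ∫ t in (0:ℝ)..S, (f S - f t) := by
      rw [intervalIntegral.integral_sub _root_.intervalIntegrable_const
        (hfc.intervalIntegrable _ _), intervalIntegral.integral_const, ← hHint S]
      simp [mul_comm]
    have rhs_eq : (∫ t in (0:ℝ)..S, p S * (S - t)) = S^2 * p S / 2 := by
      rw [intervalIntegral.integral_const_mul]
      rw [intervalIntegral.integral_sub _root_.intervalIntegrable_const
        intervalIntegral.intervalIntegrable_id, intervalIntegral.integral_const,
        _root_.integral_id]
      simp only [smul_eq_mul]
      ring
    rw [lhs_eq, ← rhs_eq]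
    refine intervalIntegral.integral_mono_on hS ?_ ?_ step
    · exact (_root_.intervalIntegrable_const).sub (hfc.intervalIntegrable _ _)
    · exact ((_root_.intervalIntegrable_const).sub intervalIntegral.intervalIntegrable_id).const_mul _
  -- derivative formulas
  set G₁ : ℝ → ℝ := fun u => p (s u) * u^3 / ((u^2+b) * s u)
    + 3*b*u*(s u * f (s u) - H (s u)) / ((u^2+b)^2 * s u) with hG₁def
  set G₂ : ℝ → ℝ := fun u => (q (s u) * u^4 * ((u^2+b) * s u)
    + 6*b*u^2 * p (s u) * (u^2+b)
    + 3*b*((u^2+b) - 5*u^2) * (s u * f (s u) - H (s u))) / ((u^2+b)^3 * s u) with hG₂def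
  have hfs : ∀ u, HasDerivAt (fun u => f (s u)) (p (s u) * (u / s u)) u :=
    fun u => (hfp (s u)).comp u (hs' u)
  have hHs : ∀ u, HasDerivAt (fun u => H (s u)) (f (s u) * (u / s u)) u :=
    fun u => (hH (s u)).comp u (hs' u)
  have hps : ∀ u, HasDerivAt (fun u => p (s u)) (q (s u) * (u / s u)) u :=
    fun u => (hpq (s u)).comp u (hs' u)
  have hbS : ∀ u : ℝ, b = (s u)^2 - u^2 := fun u => by linarith [hs2 u]
  have hG' : ∀ u, HasDerivAt (fun u => f (s u) * u^2 / (u^2+b)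
      + H (s u) * b / ((u^2+b) * s u)) (G₁ u) u := by
    intro u
    have t1 := ((hfs u).mul (hasDerivAt_pow 2 u)).div (hu2 u) (ne_of_gt (hpos u))
    have t2 := ((hHs u).mul_const b).div ((hu2 u).mul (hs' u))
      (mul_pos (hpos u) (hs0 u)).ne'
    have := t1.add t2
    refine this.congr_deriv ?_
    rw [hG₁def]
    simp only [Pi.mul_apply, Pi.pow_apply, Pi.sub_apply, id]
    have hS0 : (0:ℝ) < s u := hs0 u
    rw [hbS u]
    field_simp
    ring
  have hG'' : ∀ u, HasDerivAt G₁ (G₂ u) u := by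
    intro u
    have tA := ((hps u).mul (hasDerivAt_pow 3 u)).div ((hu2 u).mul (hs' u))
      (mul_pos (hpos u) (hs0 u)).ne'
    have tBnum := (((hasDerivAt_id u).const_mul (3*b)).mul
      (((hs' u).mul (hfs u)).sub (hHs u)))
    have tB := tBnum.div (((hu2 u).pow 2).mul (hs' u)) (mul_pos (pow_pos (hpos u) 2) (hs0 u)).ne'
    have := tA.add tB
    refine this.congr_deriv ?_
    rw [hG₂def]
    simp only [Pi.mul_apply, Pi.pow_apply, Pi.sub_apply, id]
    have hS0 : (0:ℝ) < s u := hs0 u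
    rw [hbS u]
    field_simp
    ring
  have hG₂nn : ∀ u, 0 ≤ G₂ u := by
    intro u
    have hS0 : (0:ℝ) < s u := hs0 u
    have hS2 := hs2 u
    have hpS : 0 ≤ p (s u) := hpnn hS0.le
    have hqS := hq (s u)
    have h1 : 0 ≤ s u * f (s u) - H (s u) := by linarith [hT0 hS0.le]
    have h2 : s u * f (s u) - H (s u) ≤ (s u)^2 * p (s u) / 2 := hT1 hS0.le
    rw [hG₂def]
    apply div_nonneg ?_ (by positivity)
    by_cases hcase : 0 ≤ b - 4*u^2
    · have e5 : (0:ℝ) ≤ (u^2+b) - 5*u^2 := by linarith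
      have t1 : (0:ℝ) ≤ q (s u) * u^4 * ((u^2+b) * s u) := by
        apply mul_nonneg (mul_nonneg hqS (by positivity)) (by positivity)
      have t2 : (0:ℝ) ≤ 6*b*u^2 * p (s u) * (u^2+b) := by
        apply mul_nonneg (mul_nonneg (by positivity) hpS) (by positivity)
      have t3 : (0:ℝ) ≤ 3*b*((u^2+b) - 5*u^2) * (s u * f (s u) - H (s u)) := by
        apply mul_nonneg (mul_nonneg (by positivity) e5) h1
      linarith
    · push_neg at hcase
      have hc3 : 3*b*((u^2+b) - 5*u^2) ≤ 0 := by nlinarith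
      have ht3 : 3*b*((u^2+b) - 5*u^2) * ((s u)^2 * p (s u) / 2)
          ≤ 3*b*((u^2+b) - 5*u^2) * (s u * f (s u) - H (s u)) :=
        mul_le_mul_of_nonpos_left h2 hc3
      have t1 : (0:ℝ) ≤ q (s u) * u^4 * ((u^2+b) * s u) := by
        apply mul_nonneg (mul_nonneg hqS (by positivity)) (by positivity)
      have heq : 6*b*u^2 * p (s u) * (u^2+b) + 3*b*((u^2+b) - 5*u^2) * ((s u)^2 * p (s u) / 2)
          = (3/2)*b^2*(u^2+b)*p (s u) := by
        linear_combination ((3/2)*b*(b - 4*u^2)*p (s u) + 3*b*u^2*p (s u)*0) * hS2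
      have hkey : (0:ℝ) ≤ (3/2)*b^2*(u^2+b)*p (s u) := by
        apply mul_nonneg (by positivity) hpS
      linarith
  -- conclude
  refine convexOn_of_hasDerivWithinAt2_nonneg convex_univ (f' := G₁) (f'' := G₂)
    ?_ ?_ ?_ ?_
  · exact (Differentiable.continuous fun u => (hG' u).differentiableAt).continuousOn
  · exact fun x _ => (hG' x).hasDerivWithinAt
  · exact fun x _ => (hG'' x).hasDerivWithinAt
  · exact fun x _ => hG₂nn x

lemma core_conv {b : ℝ} (hb : 0 < b) (f H : ℝ → ℝ)
    (hconv : ConvexOn ℝ Set.univ f) (hfeven : ∀ x, f (-x) = f x)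
    (hH : ∀ x, HasDerivAt H (f x) x) (hH0 : H 0 = 0) :
    ConvexOn ℝ Set.univ (fun u => f (Real.sqrt (u^2+b)) * u^2 / (u^2+b)
      + H (Real.sqrt (u^2+b)) * b / ((u^2+b) * Real.sqrt (u^2+b))) := by
  have hfc : Continuous f := by
    have := hconv.continuousOn isOpen_univ
    exact continuousOn_univ.mp this
  have hHc : Continuous H := Differentiable.continuous fun x => (hH x).differentiableAt
  have hεpos : ∀ n : ℕ, 0 < ((n:ℝ)+1)⁻¹ := fun n => by positivity
  have hf1c : ∀ n : ℕ, Continuous (avg ((n:ℝ)+1)⁻¹ f) := fun n => avg_continuous hfc _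
  have hGn : ∀ n : ℕ, ConvexOn ℝ Set.univ (fun u =>
      avg ((n:ℝ)+1)⁻¹ (avg ((n:ℝ)+1)⁻¹ f) (Real.sqrt (u^2+b)) * u^2 / (u^2+b)
      + (avg ((n:ℝ)+1)⁻¹ (avg ((n:ℝ)+1)⁻¹ H) (Real.sqrt (u^2+b))
          - avg ((n:ℝ)+1)⁻¹ (avg ((n:ℝ)+1)⁻¹ H) 0) * b
        / ((u^2+b) * Real.sqrt (u^2+b))) := by
    intro n
    set ε : ℝ := ((n:ℝ)+1)⁻¹ with hεdef
    have hε : 0 < ε := hεpos n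
    have hψ' : ∀ y, HasDerivAt (avg ε H) (avg ε f y) y := by
      intro y
      have hd := avg_hasDerivAt hHc ε y
      rw [show avg ε f y = (H (y + ε) - H (y - ε)) / (2*ε) from
        avg_of_primitive hfc hH ε y]
      exact hd
    have hψc : Continuous (avg ε H) :=
      Differentiable.continuous fun y => (hψ' y).differentiableAt
    have hHn' : ∀ x, HasDerivAt
        (fun x => avg ε (avg ε H) x - avg ε (avg ε H) 0)
        (avg ε (avg ε f) x) x := by
      intro x
      have hd := avg_hasDerivAt hψc ε x
      have he : (avg ε H (x + ε) - avg ε H (x - ε)) / (2*ε) = avg ε (avg ε f) x :=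
        (avg_of_primitive (hf1c n) hψ' ε x).symm
      rw [he] at hd
      exact hd.sub_const _
    have hfnp : ∀ x, HasDerivAt (avg ε (avg ε f))
        ((avg ε f (x + ε) - avg ε f (x - ε)) / (2*ε)) x :=
      fun x => avg_hasDerivAt (hf1c n) ε x
    have hpnq : ∀ x, HasDerivAt
        (fun x => (avg ε f (x + ε) - avg ε f (x - ε)) / (2*ε))
        (((f (x + ε + ε) - f (x + ε - ε)) / (2*ε)
          - (f (x - ε + ε) - f (x - ε - ε)) / (2*ε)) / (2*ε)) x := by
      intro x
      have h1 : HasDerivAt (fun y => avg ε f (y + ε))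
          ((f (x + ε + ε) - f (x + ε - ε)) / (2*ε)) x := by
        have := (avg_hasDerivAt hfc ε (x + ε)).comp x ((hasDerivAt_id x).add_const ε)
        simpa [Function.comp_def] using this
      have h2 : HasDerivAt (fun y => avg ε f (y - ε))
          ((f (x - ε + ε) - f (x - ε - ε)) / (2*ε)) x := by
        have := (avg_hasDerivAt hfc ε (x - ε)).comp x ((hasDerivAt_id x).sub_const ε)
        simpa [Function.comp_def] using this
      exact (h1.sub h2).div_const _
    have hqnn : ∀ x : ℝ, 0 ≤ ((f (x + ε + ε) - f (x + ε - ε)) / (2*ε)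
          - (f (x - ε + ε) - f (x - ε - ε)) / (2*ε)) / (2*ε) := by
      intro x
      have e1 : x + ε + ε = x + 2*ε := by ring
      have e2 : x + ε - ε = x := by ring
      have e3 : x - ε + ε = x := by ring
      have e4 : x - ε - ε = x - 2*ε := by ring
      rw [e1, e2, e3, e4]
      have hmid := hconv.2 (Set.mem_univ (x + 2*ε)) (Set.mem_univ (x - 2*ε))
        (by norm_num : (0:ℝ) ≤ 1/2) (by norm_num : (0:ℝ) ≤ 1/2) (by norm_num)
      simp only [smul_eq_mul] at hmid
      have e5 : (1/2 : ℝ) * (x + 2*ε) + (1/2) * (x - 2*ε) = x := by ring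
      rw [e5] at hmid
      apply div_nonneg ?_ (by positivity)
      rw [div_sub_div_same]
      apply div_nonneg ?_ (by positivity)
      linarith
    have hpn0 : (avg ε f (0 + ε) - avg ε f (0 - ε)) / (2*ε) = 0 := by
      have he : avg ε f (0 - ε) = avg ε f (0 + ε) := by
        rw [zero_sub, zero_add]
        exact avg_even hfeven ε ε
      rw [he, sub_self, zero_div]
    have hHn0 : (fun x => avg ε (avg ε H) x - avg ε (avg ε H) 0) 0 = 0 := by
      simp
    exact smooth_core hb (avg ε (avg ε f))
      (fun x => (avg ε f (x + ε) - avg ε f (x - ε)) / (2*ε))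
      (fun x => ((f (x + ε + ε) - f (x + ε - ε)) / (2*ε)
          - (f (x - ε + ε) - f (x - ε - ε)) / (2*ε)) / (2*ε))
      (fun x => avg ε (avg ε H) x - avg ε (avg ε H) 0)
      hfnp hpnq hqnn hpn0 hHn' hHn0
  refine convexOn_of_tendsto hGn (fun u => ?_)
  have hsf : Tendsto (fun n : ℕ => avg ((n:ℝ)+1)⁻¹ (avg ((n:ℝ)+1)⁻¹ f) (Real.sqrt (u^2+b)))
      atTop (𝓝 (f (Real.sqrt (u^2+b)))) := avg2_tendsto hfc _
  have hsH : Tendsto (fun n : ℕ => avg ((n:ℝ)+1)⁻¹ (avg ((n:ℝ)+1)⁻¹ H) (Real.sqrt (u^2+b))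
        - avg ((n:ℝ)+1)⁻¹ (avg ((n:ℝ)+1)⁻¹ H) 0)
      atTop (𝓝 (H (Real.sqrt (u^2+b)))) := by
    have h1 := avg2_tendsto hHc (Real.sqrt (u^2+b))
    have h2 := avg2_tendsto hHc 0
    have h3 := h1.sub h2
    rw [hH0, sub_zero] at h3
    exact h3
  exact ((hsf.mul_const _).div_const _).add ((hsH.mul_const _).div_const _)

/-- the class of even twice differentiable functions with convex second
derivative is closed under `h ↦ (u ↦ h(√(u² + b)))` for `b ≥ 0`. -/
theorem classC_closed_under_g (h : ℝ → ℝ)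
    (heven : ∀ x, h (-x) = h x)
    (hdiff : Differentiable ℝ h) (hdiff2 : Differentiable ℝ (deriv h))
    (hconv : ConvexOn ℝ Set.univ (deriv (deriv h)))
    (b : ℝ) (hb : 0 ≤ b) :
    (∀ x, h (Real.sqrt ((-x) ^ 2 + b)) = h (Real.sqrt (x ^ 2 + b))) ∧
      Differentiable ℝ (fun u => h (Real.sqrt (u ^ 2 + b))) ∧
      Differentiable ℝ (deriv (fun u => h (Real.sqrt (u ^ 2 + b)))) ∧
      ConvexOn ℝ Set.univ (deriv (deriv (fun u => h (Real.sqrt (u ^ 2 + b))))) := by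
  have hevensq : ∀ x : ℝ, h (Real.sqrt ((-x) ^ 2 + b)) = h (Real.sqrt (x ^ 2 + b)) := by
    intro x
    rw [neg_sq]
  rcases eq_or_lt_of_le hb with hb0 | hbpos
  · have hfun : (fun u : ℝ => h (Real.sqrt (u ^ 2 + b))) = h := by
      funext u
      rw [← hb0, add_zero, Real.sqrt_sq_eq_abs]
      rcases le_or_gt 0 u with hu | hu
      · rw [abs_of_nonneg hu]
      · rw [abs_of_neg hu]; exact heven u
    rw [hfun]
    exact ⟨hevensq, hdiff, hdiff2, hconv⟩
  · have hpos : ∀ u : ℝ, 0 < u^2 + b := fun u => by positivity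
    set H := deriv h with hHdef
    set f := deriv H with hfdef
    have hH' : ∀ x, HasDerivAt h (H x) x := fun x => (hdiff x).hasDerivAt
    have hf' : ∀ x, HasDerivAt H (f x) x := fun x => (hdiff2 x).hasDerivAt
    have hHodd : ∀ x, H (-x) = - H x := by
      intro x
      have e : (fun x => h (-x)) = h := funext heven
      have h1 := deriv_comp_neg h x
      rw [e] at h1
      have h2 : H x = - H (-x) := h1
      linarith
    have hH0 : H 0 = 0 := by
      have := hHodd 0
      rw [neg_zero] at this
      linarith
    have hfeven : ∀ x, f (-x) = f x := by
      intro x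
      have e : (fun x => H (-x)) = (fun x => - H x) := funext hHodd
      have h1 := deriv_comp_neg H x
      rw [e] at h1
      have h2 : deriv (fun x => - H x) x = - f x := by
        rw [deriv.fun_neg]
      rw [h2] at h1
      linarith
    have hu2 : ∀ u : ℝ, HasDerivAt (fun u : ℝ => u^2+b) (2*u) u := fun u => by
      simpa using (hasDerivAt_pow 2 u).add_const b
    have hs0 : ∀ u : ℝ, 0 < Real.sqrt (u^2+b) := fun u => Real.sqrt_pos.mpr (hpos u)
    have hs2 : ∀ u : ℝ, (Real.sqrt (u^2+b))^2 = u^2+b := fun u => Real.sq_sqrt (hpos u).le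
    have hs' : ∀ u : ℝ, HasDerivAt (fun u => Real.sqrt (u^2+b)) (u / Real.sqrt (u^2+b)) u := by
      intro u
      have hd := (hu2 u).sqrt (ne_of_gt (hpos u))
      convert hd using 1
      rw [mul_comm 2 (Real.sqrt (u^2+b)),
        ← mul_div_mul_right (c := (2:ℝ)) (hc := two_ne_zero) (a := u) (b := Real.sqrt (u^2+b))]
      ring
    have hg1 : ∀ u : ℝ, HasDerivAt (fun u => h (Real.sqrt (u^2+b)))
        (H (Real.sqrt (u^2+b)) * (u / Real.sqrt (u^2+b))) u :=
      fun u => (hH' _).comp u (hs' u)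
    have hgdiff : Differentiable ℝ (fun u : ℝ => h (Real.sqrt (u^2+b))) :=
      fun u => (hg1 u).differentiableAt
    have hderivg : deriv (fun u : ℝ => h (Real.sqrt (u^2+b)))
        = fun u => H (Real.sqrt (u^2+b)) * (u / Real.sqrt (u^2+b)) :=
      funext fun u => (hg1 u).deriv
    have hg2 : ∀ u : ℝ, HasDerivAt (fun u => H (Real.sqrt (u^2+b)) * (u / Real.sqrt (u^2+b)))
        (f (Real.sqrt (u^2+b)) * u^2 / (u^2+b)
          + H (Real.sqrt (u^2+b)) * b / ((u^2+b) * Real.sqrt (u^2+b))) u := by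
      intro u
      have hHs : HasDerivAt (fun u => H (Real.sqrt (u^2+b)))
          (f (Real.sqrt (u^2+b)) * (u / Real.sqrt (u^2+b))) u :=
        (hf' _).comp u (hs' u)
      have hquot : HasDerivAt (fun u => u / Real.sqrt (u^2+b))
          ((1 * Real.sqrt (u^2+b) - u * (u / Real.sqrt (u^2+b))) / (Real.sqrt (u^2+b))^2) u :=
        (hasDerivAt_id u).div (hs' u) (ne_of_gt (hs0 u))
      have hd := hHs.mul hquot
      refine hd.congr_deriv ?_
      have hS0 := hs0 u
      have hS2 := hs2 u
      set S := Real.sqrt (u^2+b) with hSdef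
      rw [show b = S^2 - u^2 by linarith]
      field_simp
      ring
    have hdiffg1 : Differentiable ℝ (deriv (fun u : ℝ => h (Real.sqrt (u^2+b)))) := by
      rw [hderivg]
      exact fun u => (hg2 u).differentiableAt
    have hderiv2 : deriv (deriv (fun u : ℝ => h (Real.sqrt (u^2+b))))
        = fun u => f (Real.sqrt (u^2+b)) * u^2 / (u^2+b)
          + H (Real.sqrt (u^2+b)) * b / ((u^2+b) * Real.sqrt (u^2+b)) := by
      rw [hderivg]
      exact funext fun u => (hg2 u).deriv
    refine ⟨hevensq, hgdiff, hdiffg1, ?_⟩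
    rw [hderiv2]
    exact core_conv hbpos f H hconv hfeven hf' hH0
end
end

section
/- Let $g : \mathbb{R} \to \mathbb{R}$ be an even twice differentiable function with convex second derivative, let $\varepsilon$ be a Rademacher random variable, and let $\beta \in \mathbb{R}$. Then the function $t \mapsto \mathsf{E}\,g(\beta + \varepsilon\sqrt{t})$ is convex on $(0,\infty)$. -/
open Real

noncomputable section

/-- Average of a convex function over symmetric expanding intervals (as integral over [-1,1])
is monotone. -/
lemma avg_mono (φ : ℝ → ℝ) (hφ : Continuous φ) (hconv : ConvexOn ℝ Set.univ φ) (β : ℝ)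
    {s r : ℝ} (hs : 0 < s) (hsr : s ≤ r) :
    (∫ u in (-1:ℝ)..1, φ (β + s * u)) ≤ ∫ u in (-1:ℝ)..1, φ (β + r * u) := by
  have hr : 0 < r := hs.trans_le hsr
  set c : ℝ := (1 + s / r) / 2 with hc
  have hc0 : 0 ≤ c := by positivity
  have hc1 : 0 ≤ 1 - c := by
    have : s / r ≤ 1 := (div_le_one hr).2 hsr
    simp only [hc]; linarith
  have hpt : ∀ u : ℝ, φ (β + s * u) ≤ c * φ (β + r * u) + (1 - c) * φ (β - r * u) := by
    intro u
    have h := hconv.2 (Set.mem_univ (β + r * u)) (Set.mem_univ (β - r * u)) hc0 hc1 (by ring)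
    have harg : c • (β + r * u) + (1 - c) • (β - r * u) = β + s * u := by
      simp only [smul_eq_mul, hc]
      field_simp
      ring
    rw [harg] at h
    simpa [smul_eq_mul] using h
  have hint : ∀ a : ℝ, IntervalIntegrable (fun u => φ (β + a * u)) MeasureTheory.volume (-1) 1 := by
    intro a; apply Continuous.intervalIntegrable; continuity
  have hintm : IntervalIntegrable (fun u => φ (β - r * u)) MeasureTheory.volume (-1) 1 := by
    apply Continuous.intervalIntegrable; continuity
  have hint2 : IntervalIntegrable (fun u => c * φ (β + r * u) + (1 - c) * φ (β - r * u))
      MeasureTheory.volume (-1) 1 := ((hint r).const_mul c).add (hintm.const_mul _)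
  have hneg : (∫ u in (-1:ℝ)..1, φ (β - r * u)) = ∫ u in (-1:ℝ)..1, φ (β + r * u) := by
    have := intervalIntegral.integral_comp_neg (a := (-1:ℝ)) (b := 1)
      (fun u => φ (β + r * u))
    simpa [mul_neg, sub_eq_add_neg] using this
  calc (∫ u in (-1:ℝ)..1, φ (β + s * u))
      ≤ ∫ u in (-1:ℝ)..1, (c * φ (β + r * u) + (1 - c) * φ (β - r * u)) :=
        intervalIntegral.integral_mono_on (by norm_num) (hint s) hint2 (fun u _ => hpt u)
    _ = c * (∫ u in (-1:ℝ)..1, φ (β + r * u)) + (1 - c) * ∫ u in (-1:ℝ)..1, φ (β - r * u) := by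
        rw [intervalIntegral.integral_add ((hint r).const_mul c) (hintm.const_mul _),
          intervalIntegral.integral_const_mul, intervalIntegral.integral_const_mul]
    _ = ∫ u in (-1:ℝ)..1, φ (β + r * u) := by rw [hneg]; ring

/-- for `g` even twice differentiable with convex second derivative and a
Rademacher average, `t ↦ E g(β + ε√t) = (g(β+√t) + g(β-√t))/2` is convex on `(0,∞)`. -/
theorem rademacher_expectation_convex (g : ℝ → ℝ)
    (geven : ∀ x, g (-x) = g x)
    (gdiff : Differentiable ℝ g) (gdiff2 : Differentiable ℝ (deriv g))
    (gconv : ConvexOn ℝ Set.univ (deriv (deriv g)))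
    (β : ℝ) :
    ConvexOn ℝ (Set.Ioi (0 : ℝ))
      (fun t => (g (β + Real.sqrt t) + g (β - Real.sqrt t)) / 2) := by
  set φ : ℝ → ℝ := deriv (deriv g) with hφdef
  have hφc : Continuous φ := by
    rw [← continuousOn_univ]
    exact gconv.continuousOn isOpen_univ
  set f : ℝ → ℝ := fun t => (g (β + Real.sqrt t) + g (β - Real.sqrt t)) / 2 with hfdef
  set D : ℝ → ℝ := fun t =>
    (deriv g (β + Real.sqrt t) - deriv g (β - Real.sqrt t)) / (4 * Real.sqrt t) with hDdef
  -- derivative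
  have hderiv : ∀ t ∈ Set.Ioi (0:ℝ), HasDerivAt f (D t) t := by
    intro t ht
    have ht0 : (0:ℝ) < t := ht
    have hst : 0 < Real.sqrt t := Real.sqrt_pos.2 ht0
    have hsq : HasDerivAt Real.sqrt (1 / (2 * Real.sqrt t)) t :=
      Real.hasDerivAt_sqrt ht0.ne'
    have h1 : HasDerivAt (fun u => g (β + Real.sqrt u))
        (deriv g (β + Real.sqrt t) * (1 / (2 * Real.sqrt t))) t := by
      have := ((gdiff (β + Real.sqrt t)).hasDerivAt).comp t
        ((hasDerivAt_const t β).add hsq)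
      simpa [zero_add, Function.comp_def] using this
    have h2 : HasDerivAt (fun u => g (β - Real.sqrt u))
        (deriv g (β - Real.sqrt t) * (-(1 / (2 * Real.sqrt t)))) t := by
      have := ((gdiff (β - Real.sqrt t)).hasDerivAt).comp t
        ((hasDerivAt_const t β).sub hsq)
      simpa [zero_sub, Function.comp_def] using this
    have : HasDerivAt (fun x => (g (β + Real.sqrt x) + g (β - Real.sqrt x)) / 2)
        ((deriv g (β + Real.sqrt t) * (1 / (2 * Real.sqrt t)) + deriv g (β - Real.sqrt t) * -(1 / (2 * Real.sqrt t))) / 2) t :=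
      (h1.add h2).div_const 2
    convert this using 1
    simp only [hDdef]
    field_simp
    ring
  -- monotonicity of D
  have hmono : MonotoneOn D (Set.Ioi (0:ℝ)) := by
    intro a ha b hb hab
    have ha0 : (0:ℝ) < a := ha
    have hb0 : (0:ℝ) < b := hb
    have hsa : 0 < Real.sqrt a := Real.sqrt_pos.2 ha0
    have hsb : 0 < Real.sqrt b := Real.sqrt_pos.2 hb0
    have hsab : Real.sqrt a ≤ Real.sqrt b := Real.sqrt_le_sqrt hab
    -- key: for s > 0, (deriv g (β+s) - deriv g (β-s)) = s * ∫ u in -1..1, φ (β + s*u)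
    have key : ∀ s : ℝ, 0 < s →
        deriv g (β + s) - deriv g (β - s) = s * ∫ u in (-1:ℝ)..1, φ (β + s * u) := by
      intro s hs
      have hftc : (∫ x in (β - s)..(β + s), φ x) = deriv g (β + s) - deriv g (β - s) := by
        apply intervalIntegral.integral_deriv_eq_sub
        · intro x _; exact gdiff2 x
        · exact hφc.intervalIntegrable _ _
      have hcomp : (∫ u in (-1:ℝ)..1, φ (s * u + β))
          = s⁻¹ • ∫ x in (s * (-1) + β)..(s * 1 + β), φ x :=
        intervalIntegral.integral_comp_mul_add φ hs.ne' β
      have : (∫ u in (-1:ℝ)..1, φ (β + s * u)) = s⁻¹ * ∫ x in (β - s)..(β + s), φ x := by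
        rw [show (β - s) = s * (-1) + β by ring, show (β + s) = s * 1 + β by ring]
        simpa [add_comm, smul_eq_mul] using hcomp
      rw [this, hftc]
      field_simp
    have ineq := avg_mono φ hφc gconv β hsa hsab
    have e1 := key _ hsa
    have e2 := key _ hsb
    simp only [hDdef]
    rw [div_le_div_iff₀ (by positivity) (by positivity)]
    have h1 : deriv g (β + Real.sqrt a) - deriv g (β - Real.sqrt a)
        = Real.sqrt a * ∫ u in (-1:ℝ)..1, φ (β + Real.sqrt a * u) := e1
    have h2 : deriv g (β + Real.sqrt b) - deriv g (β - Real.sqrt b)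
        = Real.sqrt b * ∫ u in (-1:ℝ)..1, φ (β + Real.sqrt b * u) := e2
    nlinarith [mul_le_mul_of_nonneg_left ineq (by positivity : (0:ℝ) ≤ 4 * Real.sqrt a * Real.sqrt b)]
  -- assemble
  have hconvI : Convex ℝ (Set.Ioi (0:ℝ)) := convex_Ioi 0
  have hdiff : DifferentiableOn ℝ f (interior (Set.Ioi (0:ℝ))) := by
    rw [interior_Ioi]
    exact fun t ht => ((hderiv t ht).differentiableAt).differentiableWithinAt
  have hderiveq : Set.EqOn (deriv f) D (interior (Set.Ioi (0:ℝ))) := by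
    rw [interior_Ioi]
    exact fun t ht => (hderiv t ht).deriv
  have hcont : ContinuousOn f (Set.Ioi (0:ℝ)) :=
    fun t ht => ((hderiv t ht).differentiableAt).continuousAt.continuousWithinAt
  have := MonotoneOn.convexOn_of_deriv hconvI hcont hdiff
    (by rw [interior_Ioi] at *; exact hmono.congr hderiveq.symm)
  exact this
end
end
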